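/- Let x be a C¹ solution of the first-order singular Cucker–Smale system with strictly increasing natural velocities ν_1 < ν_2 < … < ν_N. Then the position diameter D_x(t) = max_i x_i(t) − min_i x_i(t) satisfies D_x(t) ≤ C'_{M1} for all t ≥ 0, where C'_{M1} = max{ D_x(0), ((1−β)(ν_N − ν_1)/κ)^{1/(1−β)} }. -/

import Mathlib

open Real Filter Set

/-- The interaction function `Ψ(x) = sign(x)·|x|^{1−β}/(1−β)`. -/
noncomputable def psiCS (β y : ℝ) : ℝ := Real.sign y * |y| ^ (1 - β) / (1 - β)

/-- A C¹ solution on `[0,∞)` of the first-order singular Cucker–Smale system: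
`x_i'(t) = ν_i + (κ/N) Σ_k Ψ(x_k(t) − x_i(t))`. -/
def IsCSSol (N : ℕ) (β κ : ℝ) (ν : Fin N → ℝ) (x : ℝ → Fin N → ℝ) : Prop :=
  (∀ i, ContDiffOn ℝ 1 (fun t => x t i) (Set.Ici 0)) ∧
  ∀ i, ∀ t ≥ (0:ℝ), HasDerivWithinAt (fun s => x s i)
    (ν i + (κ / (N:ℝ)) * ∑ k, psiCS β (x t k - x t i)) (Set.Ici 0) t

/-- The diameter of a configuration `y : Fin N → ℝ`. -/
noncomputable def diam {N : ℕ} (y : Fin N → ℝ) : ℝ := ⨆ i, ⨆ j, (y i - y j)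

lemma psiCS_of_nonneg {β : ℝ} (hβ1 : β < 1) {y : ℝ} (hy : 0 ≤ y) :
    psiCS β y = y ^ (1 - β) / (1 - β) := by
  rcases eq_or_lt_of_le hy with h | h
  · simp [psiCS, ← h, Real.sign_zero, Real.zero_rpow (by linarith : (1:ℝ) - β ≠ 0)]
  · simp [psiCS, Real.sign_of_pos h, abs_of_pos h]

lemma psiCS_neg (β y : ℝ) : psiCS β (-y) = - psiCS β y := by
  unfold psiCS
  rw [Real.sign_neg, abs_neg]
  ring

lemma rpow_subadd {p x y : ℝ} (hp : 0 ≤ p) (hp1 : p ≤ 1) (hx : 0 ≤ x) (hy : 0 ≤ y) :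
    (x + y) ^ p ≤ x ^ p + y ^ p := by
  have h := NNReal.rpow_add_le_add_rpow x.toNNReal y.toNNReal hp hp1
  have h2 := (NNReal.coe_le_coe).2 h
  rw [NNReal.coe_rpow, NNReal.coe_add, NNReal.coe_add, NNReal.coe_rpow, NNReal.coe_rpow,
    Real.coe_toNNReal x hx, Real.coe_toNNReal y hy] at h2
  exact h2

lemma psiCS_superadd {β : ℝ} (hβ0 : 0 ≤ β) (hβ1 : β < 1) {a b : ℝ} (ha : a ≤ 0) (hb : 0 ≤ b) :
    psiCS β (b - a) ≤ psiCS β b - psiCS β a := by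
  have h1 : (0:ℝ) < 1 - β := by linarith
  have hna : (0:ℝ) ≤ -a := by linarith
  have hA : psiCS β a = -((-a) ^ (1 - β) / (1 - β)) := by
    have h := psiCS_neg β (-a)
    rw [neg_neg] at h
    rw [h, psiCS_of_nonneg hβ1 hna]
  rw [psiCS_of_nonneg hβ1 hb, hA, psiCS_of_nonneg hβ1 (by linarith : (0:ℝ) ≤ b - a)]
  have key : (b + -a) ^ (1 - β) ≤ b ^ (1 - β) + (-a) ^ (1 - β) :=
    rpow_subadd (by linarith) (by linarith) hb hna
  have hba : b - a = b + -a := by ring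
  rw [hba, sub_neg_eq_add, ← add_div]
  exact div_le_div_of_nonneg_right key h1.le

lemma eventually_le_of_deriv_neg {f : ℝ → ℝ} {c T M : ℝ} (hc : c < 0)
    (hf : HasDerivWithinAt f c (Ici T) T) (hfT : f T ≤ M) :
    ∀ᶠ s in nhdsWithin T (Ici T), f s ≤ M := by
  have h := hasDerivWithinAt_iff_isLittleO.mp hf
  have h2 := (Asymptotics.isLittleO_iff.mp h) (show (0:ℝ) < -c/2 by linarith)
  filter_upwards [h2, self_mem_nhdsWithin] with s hs hs'
  simp only [Real.norm_eq_abs, smul_eq_mul] at hs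
  have hsT : (0:ℝ) ≤ s - T := sub_nonneg.2 hs'
  rw [abs_of_nonneg hsT] at hs
  have h3 := (abs_le.mp hs).2
  have h4 : 0 ≤ -c * (s - T) := mul_nonneg (by linarith) hsT
  linarith

/-- Uniform-in-time upper bound for the position diameter under strictly
increasing natural velocities. -/
theorem stmt6 (N : ℕ) (hN : 2 ≤ N) (β κ : ℝ) (hβ0 : 0 < β) (hβ1 : β < 1)
    (hκ : 0 < κ) (ν : Fin N → ℝ) (x : ℝ → Fin N → ℝ) (hx : IsCSSol N β κ ν x)
    (hν : StrictMono ν) :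
    ∀ t ≥ (0:ℝ), diam (x t) ≤
      max (diam (x 0))
        (((1 - β) * (ν ⟨N - 1, by omega⟩ - ν ⟨0, by omega⟩) / κ) ^ (1 / (1 - β))) := by
  have hNpos : (0:ℕ) < N := by omega
  haveI : Nonempty (Fin N) := ⟨⟨0, by omega⟩⟩
  set L : Fin N := ⟨N - 1, by omega⟩ with hL
  set Z : Fin N := ⟨0, by omega⟩ with hZ
  set C : ℝ := ν L - ν Z with hCdef
  have hβ' : (0:ℝ) < 1 - β := by linarith
  have hC : 0 < C := by
    have : Z < L := by
      rw [Fin.lt_def]; simp [hL, hZ]; omega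
    have := hν this; simp only [hCdef]; linarith
  set q : ℝ := (1 - β) * C / κ with hqdef
  have hq : 0 < q := by positivity
  set R : ℝ := q ^ (1 / (1 - β)) with hRdef
  have hR : 0 < R := Real.rpow_pos_of_pos hq _
  set M : ℝ := max (diam (x 0)) R with hMdef
  have hMR : R ≤ M := le_max_right _ _
  -- key: if R < D then C - κ * psiCS β D < 0
  have key : ∀ D : ℝ, R < D → C - κ * psiCS β D < 0 := by
    intro D hD
    have hD0 : 0 < D := lt_trans hR hD
    have h1 : R ^ (1 - β) < D ^ (1 - β) :=
      Real.rpow_lt_rpow hR.le hD hβ'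
    have h2 : R ^ (1 - β) = q := by
      rw [hRdef, ← Real.rpow_mul hq.le,
        one_div_mul_cancel (by linarith : (1:ℝ) - β ≠ 0), Real.rpow_one]
    rw [psiCS_of_nonneg hβ1 hD0.le]
    rw [h2] at h1
    rw [hqdef, div_lt_iff₀ hκ] at h1
    have hA : κ * (D ^ (1 - β) / (1 - β)) = (κ * D ^ (1 - β)) / (1 - β) := by ring
    have : C < (κ * D ^ (1 - β)) / (1 - β) := by
      rw [lt_div_iff₀ hβ']
      nlinarith
    linarith [hA ▸ this]
  -- pairwise bound at time 0
  have h0 : ∀ i j, x 0 i - x 0 j ≤ diam (x 0) := by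
    intro i j
    have b1 : BddAbove (Set.range fun j => x 0 i - x 0 j) :=
      Set.Finite.bddAbove (Set.finite_range _)
    have h1 : x 0 i - x 0 j ≤ ⨆ j, (x 0 i - x 0 j) := le_ciSup b1 j
    have b2 : BddAbove (Set.range fun i => ⨆ j, (x 0 i - x 0 j)) :=
      Set.Finite.bddAbove (Set.finite_range _)
    have h2 : (⨆ j, (x 0 i - x 0 j)) ≤ diam (x 0) := le_ciSup b2 i
    exact h1.trans h2
  have hcont : ∀ i j, ContinuousOn (fun t => x t i - x t j) (Ici 0) :=
    fun i j => ((hx.1 i).continuousOn).sub ((hx.1 j).continuousOn)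
  -- main claim
  have main : ∀ ε > (0:ℝ), ∀ t ≥ (0:ℝ), ∀ i j, x t i - x t j ≤ M + ε := by
    intro ε hε
    by_contra hcon
    push_neg at hcon
    obtain ⟨t₀, ht₀, i₀, j₀, hviol⟩ := hcon
    set U : Set ℝ := {t | t ∈ Icc 0 t₀ ∧ ∃ i j, M + ε < x t i - x t j} with hU
    have hUne : t₀ ∈ U := ⟨⟨ht₀, le_refl _⟩, i₀, j₀, hviol⟩
    have hUbd : BddBelow U := ⟨0, fun u hu => hu.1.1⟩
    set T : ℝ := sInf U with hTdef
    have hT0 : 0 ≤ T := le_csInf ⟨t₀, hUne⟩ (fun u hu => hu.1.1)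
    have hTt₀ : T ≤ t₀ := csInf_le hUbd hUne
    have hbefore : ∀ s, 0 ≤ s → s < T → ∀ i j, x s i - x s j ≤ M + ε := by
      intro s hs hsT i j
      by_contra hcc
      push_neg at hcc
      have : s ∈ U := ⟨⟨hs, by linarith⟩, i, j, hcc⟩
      have := csInf_le hUbd this
      linarith
    -- bound at T
    have hTle : ∀ i j, x T i - x T j ≤ M + ε := by
      intro i j
      rcases eq_or_lt_of_le hT0 with h | h
      · rw [← h]
        calc x 0 i - x 0 j ≤ diam (x 0) := h0 i j
          _ ≤ M := le_max_left _ _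
          _ ≤ M + ε := by linarith
      · have hne : Set.Ico (0:ℝ) T |>.Nonempty := ⟨0, ⟨le_refl _, h⟩⟩
        have hcl : T ∈ closure (Set.Ico (0:ℝ) T) := by
          rw [closure_Ico (by linarith : (0:ℝ) ≠ T)]
          exact ⟨hT0, le_refl _⟩
        haveI : (nhdsWithin T (Set.Ico (0:ℝ) T)).NeBot :=
          mem_closure_iff_nhdsWithin_neBot.mp hcl
        have htends : Filter.Tendsto (fun t => x t i - x t j)
            (nhdsWithin T (Set.Ico (0:ℝ) T)) (nhds (x T i - x T j)) :=
          ((hcont i j) T (mem_Ici.2 hT0)).mono (fun s hs => mem_Ici.2 hs.1) |>.tendsto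
        refine le_of_tendsto htends ?_
        filter_upwards [self_mem_nhdsWithin] with s hs
        exact hbefore s hs.1 hs.2 i j
    -- propagation to the right
    have hprop : ∀ i j, ∀ᶠ s in nhdsWithin T (Ici T), x s i - x s j ≤ M + ε := by
      intro i j
      rcases lt_or_eq_of_le (hTle i j) with hlt | heq
      · have hcw : ContinuousWithinAt (fun t => x t i - x t j) (Ici T) T :=
          ((hcont i j) T (mem_Ici.2 hT0)).mono (Ici_subset_Ici.2 hT0)
        have hev : ∀ᶠ y in nhds (x T i - x T j), y ≤ M + ε :=
          Filter.eventually_of_mem (Iio_mem_nhds hlt) (fun y hy => le_of_lt hy)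
        exact hcw.eventually hev
      · -- i is argmax, j is argmin at time T
        have hMε : 0 < M + ε := by linarith [lt_of_lt_of_le hR hMR]
        have hmax : ∀ k, x T k ≤ x T i := by
          intro k; have := hTle k j; linarith
        have hmin : ∀ k, x T j ≤ x T k := by
          intro k; have := hTle i k; linarith
        have hdij : HasDerivWithinAt (fun s => x s i - x s j)
            ((ν i + (κ / (N:ℝ)) * ∑ k, psiCS β (x T k - x T i)) -
             (ν j + (κ / (N:ℝ)) * ∑ k, psiCS β (x T k - x T j))) (Ici 0) T :=
          (hx.2 i T hT0).sub (hx.2 j T hT0)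
        -- bound the derivative
        have hsum : ∀ k : Fin N, psiCS β (x T k - x T i) - psiCS β (x T k - x T j)
            ≤ -psiCS β (M + ε) := by
          intro k
          have ha : x T k - x T i ≤ 0 := sub_nonpos.2 (hmax k)
          have hb : 0 ≤ x T k - x T j := sub_nonneg.2 (hmin k)
          have hkey := psiCS_superadd hβ0.le hβ1 ha hb
          have hD : (x T k - x T j) - (x T k - x T i) = M + ε := by
            rw [← heq]; ring
          rw [hD] at hkey
          linarith
        have hsum2 : ∑ k, psiCS β (x T k - x T i) - ∑ k, psiCS β (x T k - x T j)
            ≤ (N:ℝ) * (-psiCS β (M + ε)) := by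
          rw [← Finset.sum_sub_distrib]
          calc ∑ k, (psiCS β (x T k - x T i) - psiCS β (x T k - x T j))
              ≤ ∑ _k : Fin N, (-psiCS β (M + ε)) :=
                Finset.sum_le_sum (fun k _ => hsum k)
            _ = (N:ℝ) * (-psiCS β (M + ε)) := by
                rw [Finset.sum_const, Finset.card_univ, Fintype.card_fin, nsmul_eq_mul]
        have hNne : (N:ℝ) ≠ 0 := Nat.cast_ne_zero.2 (by omega)
        have hNpos' : (0:ℝ) < (N:ℝ) := by positivity
        have hderiv_le : (ν i + (κ / (N:ℝ)) * ∑ k, psiCS β (x T k - x T i)) -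
             (ν j + (κ / (N:ℝ)) * ∑ k, psiCS β (x T k - x T j)) < 0 := by
          have hνi : ν i ≤ ν L := by
            apply hν.monotone
            rw [Fin.le_def]; simp [hL]; omega
          have hνj : ν Z ≤ ν j := by
            apply hν.monotone
            rw [Fin.le_def]; simp [hZ]
          have hmul : (κ / (N:ℝ)) * (∑ k, psiCS β (x T k - x T i) -
              ∑ k, psiCS β (x T k - x T j)) ≤ (κ / (N:ℝ)) * ((N:ℝ) * (-psiCS β (M + ε))) :=
            mul_le_mul_of_nonneg_left hsum2 (by positivity)
          have hsimp : (κ / (N:ℝ)) * ((N:ℝ) * (-psiCS β (M + ε))) = -(κ * psiCS β (M + ε)) := by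
            field_simp
          rw [hsimp] at hmul
          have hkk := key (M + ε) (by linarith)
          have expand : (ν i + (κ / (N:ℝ)) * ∑ k, psiCS β (x T k - x T i)) -
             (ν j + (κ / (N:ℝ)) * ∑ k, psiCS β (x T k - x T j)) =
             (ν i - ν j) + (κ / (N:ℝ)) * (∑ k, psiCS β (x T k - x T i) -
              ∑ k, psiCS β (x T k - x T j)) := by ring
          rw [expand]
          have : ν i - ν j ≤ C := by simp only [hCdef]; linarith
          linarith
        have hmono := hdij.mono (Ici_subset_Ici.2 hT0)
        exact eventually_le_of_deriv_neg hderiv_le hmono heq.le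
    have hall : ∀ᶠ s in nhdsWithin T (Ici T), ∀ i j, x s i - x s j ≤ M + ε :=
      Filter.eventually_all.2 (fun i => Filter.eventually_all.2 (fun j => hprop i j))
    rw [eventually_nhdsWithin_iff, Metric.eventually_nhds_iff] at hall
    obtain ⟨δ, hδ, hδall⟩ := hall
    have hlt : sInf U < T + δ := by rw [← hTdef]; linarith
    obtain ⟨u, huU, hu⟩ := (csInf_lt_iff hUbd ⟨t₀, hUne⟩).mp hlt
    have hTu : T ≤ u := csInf_le hUbd huU
    have hdist : dist u T < δ := by
      rw [Real.dist_eq, abs_of_nonneg (by linarith)]; linarith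
    have := hδall hdist (mem_Ici.2 hTu)
    obtain ⟨i, j, hij⟩ := huU.2
    have := this i j
    linarith
  -- conclude
  intro t ht
  refine ciSup_le fun i => ciSup_le fun j => ?_
  have : ∀ ε > (0:ℝ), x t i - x t j ≤ M + ε := fun ε hε => main ε hε t ht i j
  have hfin : x t i - x t j ≤ M := le_of_forall_pos_le_add this
  exact hfin
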